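/- Let p be a prime and m ≥ 1. If C is a linear code over GF(p^h) of length p^m + 1 that is invariant under the permutation action of PGL(2, p^m) on its coordinates (identified with the projective line PG(1, p^m)), then C is one of: the zero code, the full space GF(p^h)^{p^m+1}, the repetition code {(c, c, ..., c) : c ∈ GF(p^h)}, or the sum-zero code {(c₀, ..., c_{p^m}) : c₀ + ... + c_{p^m} = 0}. -/

import Mathlib

open scoped LinearAlgebra.Projectivization
open Projectivization

/-- The action of an invertible matrix on the projective line. -/
noncomputable def pact {F : Type*} [Field F] (g : GL (Fin 2) F) :
    ℙ F (Fin 2 → F) → ℙ F (Fin 2 → F) :=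
  Projectivization.map
    (((Matrix.GeneralLinearGroup.toLin g).toLinearEquiv :
        (Fin 2 → F) ≃ₗ[F] (Fin 2 → F)) : (Fin 2 → F) →ₗ[F] (Fin 2 → F))
    (Matrix.GeneralLinearGroup.toLin g).toLinearEquiv.injective

instance projLineFinite (F : Type*) [Field F] [Fintype F] :
    Finite (ℙ F (Fin 2 → F)) := by
  unfold Projectivization; infer_instance

/-- The sum-zero code: all vectors whose coordinates sum to zero. -/
noncomputable def sumZeroCode (E X : Type*) [Field E] [Finite X] : Submodule E (X → E) :=
  letI : Fintype X := Fintype.ofFinite X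
  LinearMap.ker (∑ x : X, (LinearMap.proj x : (X → E) →ₗ[E] E))

/-- The repetition code. -/
def repCode (E X : Type*) [Field E] : Submodule E (X → E) :=
  Submodule.span E {fun _ => (1 : E)}

section Aux

variable {F : Type*} [Field F]

@[simp] lemma coe_mkOfDetNeZero {n : Type*} [DecidableEq n] [Fintype n]
    (A : Matrix n n F) (h : A.det ≠ 0) :
    ((Matrix.GeneralLinearGroup.mkOfDetNeZero A h : GL n F) : Matrix n n F) = A := rfl

lemma pact_mk (g : GL (Fin 2) F) (v : Fin 2 → F) (hv : v ≠ 0) :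
    pact g (mk F v hv) = mk F ((g : Matrix (Fin 2) (Fin 2) F).mulVec v)
      (by simpa using (Matrix.GeneralLinearGroup.toLin g).toLinearEquiv.map_ne_zero_iff.2 hv) := by
  rw [pact, Projectivization.map_mk]
  congr 1

lemma pact_pact (g h : GL (Fin 2) F) (x : ℙ F (Fin 2 → F)) :
    pact g (pact h x) = pact (g * h) x := by
  induction x using Projectivization.ind with
  | h v hv => simp only [pact_mk, Matrix.mulVec_mulVec, Units.val_mul]

lemma pact_one (x : ℙ F (Fin 2 → F)) : pact 1 x = x := by
  induction x using Projectivization.ind with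
  | h v hv => simp [pact_mk]

lemma vne0 (a : F) : (![a, 1] : Fin 2 → F) ≠ 0 := by
  intro hc; have := congrFun hc 1; simp at this

lemma vne0' : (![1, 0] : Fin 2 → F) ≠ 0 := by
  intro hc; have := congrFun hc 0; simp at this

noncomputable def Pinf : ℙ F (Fin 2 → F) := mk F ![1, 0] vne0'

noncomputable def Ppt (a : F) : ℙ F (Fin 2 → F) := mk F ![a, 1] (vne0 a)

lemma Ppt_inj : Function.Injective (Ppt (F := F)) := by
  intro a b hab
  rw [Ppt, Ppt, mk_eq_mk_iff] at hab
  obtain ⟨c, hc⟩ := hab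
  have h1 := congrFun hc 1
  have h0 := congrFun hc 0
  simp [Units.smul_def] at h1 h0
  rw [h1] at h0; simpa using h0.symm

lemma Ppt_ne_inf (a : F) : Ppt a ≠ Pinf := by
  rw [Ppt, Pinf, Ne, mk_eq_mk_iff]
  rintro ⟨c, hc⟩
  have h1 := congrFun hc 1
  simp [Units.smul_def] at h1

lemma Pclass (x : ℙ F (Fin 2 → F)) : (∃ a, x = Ppt a) ∨ x = Pinf := by
  induction x using Projectivization.ind with
  | h v hv =>
    rcases eq_or_ne (v 1) 0 with h1 | h1
    · right
      have h0 : v 0 ≠ 0 := by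
        intro h0; apply hv; funext i; fin_cases i <;> assumption
      rw [Pinf, mk_eq_mk_iff]
      exact ⟨Units.mk0 (v 0) h0, by funext i; fin_cases i <;> simp [Units.smul_def, h1]⟩
    · left
      refine ⟨v 0 / v 1, ?_⟩
      rw [Ppt, mk_eq_mk_iff]
      exact ⟨Units.mk0 (v 1) h1, by funext i; fin_cases i <;>
        simp [Units.smul_def, mul_div_cancel₀ _ h1]⟩

/-- transitivity -/
lemma Ptrans (x : ℙ F (Fin 2 → F)) : ∃ g : GL (Fin 2) F, pact g Pinf = x := by
  induction x using Projectivization.ind with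
  | h v hv =>
    rcases eq_or_ne (v 0) 0 with h0 | h0
    · have h1 : v 1 ≠ 0 := by
        intro h1; apply hv; funext i; fin_cases i <;> assumption
      refine ⟨Matrix.GeneralLinearGroup.mkOfDetNeZero ![![v 0, 1], ![v 1, 0]]
        (by erw [Matrix.det_fin_two]; simp [h1]), ?_⟩
      rw [Pinf, pact_mk, mk_eq_mk_iff]
      exact ⟨1, by erw [coe_mkOfDetNeZero]; funext i; fin_cases i <;>
        simp [Matrix.mulVec, dotProduct, Fin.sum_univ_two]⟩
    · refine ⟨Matrix.GeneralLinearGroup.mkOfDetNeZero ![![v 0, 0], ![v 1, 1]]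
        (by erw [Matrix.det_fin_two]; simp [h0]), ?_⟩
      rw [Pinf, pact_mk, mk_eq_mk_iff]
      exact ⟨1, by erw [coe_mkOfDetNeZero]; funext i; fin_cases i <;>
        simp [Matrix.mulVec, dotProduct, Fin.sum_univ_two]⟩

/-- translation matrix -/
noncomputable def tmat (a : F) : GL (Fin 2) F :=
  Matrix.GeneralLinearGroup.mkOfDetNeZero ![![1, a], ![0, 1]]
    (by erw [Matrix.det_fin_two]; simp)

lemma tmat_inf (a : F) : pact (tmat a) Pinf = Pinf := by
  rw [Pinf, tmat, pact_mk, mk_eq_mk_iff]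
  exact ⟨1, by erw [coe_mkOfDetNeZero]; funext i; fin_cases i <;>
    simp [Matrix.mulVec, dotProduct, Fin.sum_univ_two]⟩

lemma tmat_pt (a b : F) : pact (tmat a) (Ppt b) = Ppt (b + a) := by
  rw [Ppt, Ppt, tmat, pact_mk, mk_eq_mk_iff]
  refine ⟨1, ?_⟩
  erw [coe_mkOfDetNeZero]
  funext i; fin_cases i <;>
    simp [Matrix.mulVec, dotProduct, Fin.sum_univ_two, add_comm]

noncomputable def pactEquiv (g : GL (Fin 2) F) : ℙ F (Fin 2 → F) ≃ ℙ F (Fin 2 → F) where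
  toFun := pact g
  invFun := pact g⁻¹
  left_inv := fun x => by rw [pact_pact, inv_mul_cancel, pact_one]
  right_inv := fun x => by rw [pact_pact, mul_inv_cancel, pact_one]

noncomputable def POptEquiv : Option F ≃ ℙ F (Fin 2 → F) := by
  refine Equiv.ofBijective (fun o => o.elim Pinf Ppt) ⟨?_, ?_⟩
  · rintro (_ | a) (_ | b) hab
    · rfl
    · exact absurd hab.symm (Ppt_ne_inf b)
    · exact absurd hab (Ppt_ne_inf a)
    · exact congrArg _ (Ppt_inj hab)
  · intro x
    rcases Pclass x with ⟨a, rfl⟩ | rfl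
    · exact ⟨some a, rfl⟩
    · exact ⟨none, rfl⟩

variable [Fintype F] {E : Type*} [Field E]

set_option linter.unusedSectionVars false

lemma sum_proj [Fintype (ℙ F (Fin 2 → F))] (c : ℙ F (Fin 2 → F) → E) :
    ∑ x, c x = c Pinf + ∑ a : F, c (Ppt a) := by
  rw [← Equiv.sum_comp POptEquiv c, Fintype.sum_option]
  rfl

lemma sum_pact [Fintype (ℙ F (Fin 2 → F))] (g : GL (Fin 2) F) (c : ℙ F (Fin 2 → F) → E) :
    ∑ x, c (pact g x) = ∑ x, c x :=
  Equiv.sum_comp (pactEquiv g) c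

lemma mem_sumZeroCode [inst : Fintype (ℙ F (Fin 2 → F))] (f : ℙ F (Fin 2 → F) → E) :
    f ∈ sumZeroCode E (ℙ F (Fin 2 → F)) ↔ ∑ x, f x = 0 := by
  have hi : inst = Fintype.ofFinite _ := Subsingleton.elim _ _
  subst hi
  rw [sumZeroCode, LinearMap.mem_ker]
  simp [LinearMap.sum_apply]

end Aux

theorem stmt_17 (p m h : ℕ) (hp : p.Prime) (hm : 1 ≤ m) (hh : 1 ≤ h)
    (F E : Type*) [Field F] [Fintype F] [Field E] [Fintype E]
    (hF : Fintype.card F = p ^ m) (hE : Fintype.card E = p ^ h)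
    (C : Submodule E (ℙ F (Fin 2 → F) → E))
    (hinv : ∀ g : GL (Fin 2) F, ∀ c ∈ C, (fun x => c (pact g x)) ∈ C) :
    C = ⊥ ∨ C = ⊤ ∨ C = repCode E (ℙ F (Fin 2 → F)) ∨
      C = sumZeroCode E (ℙ F (Fin 2 → F)) := by
  classical
  letI : Fintype (ℙ F (Fin 2 → F)) := Fintype.ofFinite _
  have hp0 : (p : E) = 0 := by
    have h1 : ((Fintype.card E : ℕ) : E) = 0 := FiniteField.cast_card_eq_zero E
    rw [hE] at h1; push_cast at h1
    exact pow_eq_zero_iff (by omega) |>.1 h1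
  have hq0 : ((Fintype.card F : ℕ) : E) = 0 := by
    rw [hF]; push_cast; rw [hp0]; exact zero_pow (by omega)
  have hcardX : ((Fintype.card (ℙ F (Fin 2 → F)) : ℕ) : E) = 1 := by
    have h2 : Fintype.card (ℙ F (Fin 2 → F)) = Fintype.card F + 1 := by
      rw [← Fintype.card_congr (POptEquiv (F := F)), Fintype.card_option]
    rw [h2]; push_cast; rw [hq0, zero_add]
  -- averaging: for c ∈ C, ((∑ c) - c Pinf) • (1 - e_Pinf) ∈ C
  have havg : ∀ c ∈ C,
      ((∑ x, c x) - c Pinf) • ((fun _ => 1) - Pi.single Pinf 1 : ℙ F (Fin 2 → F) → E) ∈ C := by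
    intro c hc
    have hA : (∑ a : F, fun x => c (pact (tmat a) x)) ∈ C :=
      Submodule.sum_mem C fun a _ => hinv (tmat a) c hc
    have hAeq : (∑ a : F, fun x => c (pact (tmat a) x)) =
        ((∑ x, c x) - c Pinf) • ((fun _ => 1) - Pi.single Pinf 1 : ℙ F (Fin 2 → F) → E) := by
      funext y
      rw [Finset.sum_apply]
      rcases Pclass y with ⟨b, rfl⟩ | rfl
      · have he : ∀ a : F, c (pact (tmat a) (Ppt b)) = c (Ppt (b + a)) := fun a => by
          rw [tmat_pt]
        rw [Finset.sum_congr rfl fun a _ => he a]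
        have h3 : ∑ a : F, c (Ppt (b + a)) = ∑ a : F, c (Ppt a) :=
          Equiv.sum_comp (Equiv.addLeft b) (fun y => c (Ppt y))
        rw [h3, sum_proj c]
        simp [Pi.single_eq_of_ne (Ppt_ne_inf b)]
      · have he : ∀ a : F, c (pact (tmat a) Pinf) = c Pinf := fun a => by rw [tmat_inf]
        rw [Finset.sum_congr rfl fun a _ => he a, Finset.sum_const]
        simp [nsmul_eq_mul, hq0]
    rwa [hAeq] at hA
  -- conjugation: all 1 - e_x are in C once 1 - e_Pinf is
  have hconj : ((fun _ => 1) - Pi.single Pinf 1 : ℙ F (Fin 2 → F) → E) ∈ C →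
      ∀ z : ℙ F (Fin 2 → F), ((fun _ => 1) - Pi.single z 1 : ℙ F (Fin 2 → F) → E) ∈ C := by
    intro hw z
    obtain ⟨g, hg⟩ := Ptrans z
    have hmem := hinv g⁻¹ _ hw
    have heq : (fun y => ((fun _ => 1) - Pi.single Pinf 1 : ℙ F (Fin 2 → F) → E) (pact g⁻¹ y)) =
        ((fun _ => 1) - Pi.single z 1 : ℙ F (Fin 2 → F) → E) := by
      funext y
      by_cases hy : y = z
      · subst hy
        have h4 : pact g⁻¹ y = Pinf := by rw [← hg, pact_pact, inv_mul_cancel, pact_one]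
        simp [h4, Pi.single_eq_same]
      · have h4 : pact g⁻¹ y ≠ Pinf := by
          intro hcon
          apply hy
          have h5 := congrArg (pact g) hcon
          rwa [pact_pact, mul_inv_cancel, pact_one, hg] at h5
        simp [Pi.single_eq_of_ne h4, Pi.single_eq_of_ne hy]
    rwa [heq] at hmem
  -- spanning: sum-zero vectors are spanned by the 1 - e_x
  have hspan : (∀ z : ℙ F (Fin 2 → F), ((fun _ => 1) - Pi.single z 1 : ℙ F (Fin 2 → F) → E) ∈ C) →
      sumZeroCode E (ℙ F (Fin 2 → F)) ≤ C := by
    intro hall f hf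
    rw [mem_sumZeroCode] at hf
    have hfe : f = ∑ z : ℙ F (Fin 2 → F),
        (-f z) • ((fun _ => 1) - Pi.single z 1 : ℙ F (Fin 2 → F) → E) := by
      funext y
      rw [Finset.sum_apply]
      have he : ∀ z : ℙ F (Fin 2 → F),
          ((-f z) • ((fun _ => 1) - Pi.single z 1 : ℙ F (Fin 2 → F) → E)) y
          = f z * (Pi.single z 1 : ℙ F (Fin 2 → F) → E) y - f z := by
        intro z; simp [Pi.smul_apply, Pi.sub_apply, smul_eq_mul]; ring
      rw [Finset.sum_congr rfl fun z _ => he z, Finset.sum_sub_distrib, hf, sub_zero]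
      rw [Finset.sum_eq_single y (fun z _ hzy => by simp [Pi.single_eq_of_ne (Ne.symm hzy)])
        (fun hy => absurd (Finset.mem_univ y) hy)]
      simp
    rw [hfe]
    exact Submodule.sum_mem C fun z _ => Submodule.smul_mem C _ (hall z)
  by_cases hconst : ∀ c ∈ C, ∀ z : ℙ F (Fin 2 → F), c z = c Pinf
  · -- C ≤ repCode
    have hle : C ≤ repCode E (ℙ F (Fin 2 → F)) := by
      intro c hc
      rw [repCode, Submodule.mem_span_singleton]
      refine ⟨c Pinf, ?_⟩
      funext z
      simp [Pi.smul_apply, smul_eq_mul, hconst c hc z]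
    by_cases hbot : C = ⊥
    · exact Or.inl hbot
    · refine Or.inr (Or.inr (Or.inl (le_antisymm hle ?_)))
      obtain ⟨c, hcC, hc0⟩ := Submodule.exists_mem_ne_zero_of_ne_bot hbot
      obtain ⟨a, ha⟩ := Submodule.mem_span_singleton.1 (hle hcC)
      have ha0 : a ≠ 0 := by rintro rfl; rw [zero_smul] at ha; exact hc0 ha.symm
      rw [repCode, Submodule.span_le, Set.singleton_subset_iff]
      have h7 : (fun _ => (1 : E)) = a⁻¹ • c := by
        rw [← ha, smul_smul, inv_mul_cancel₀ ha0, one_smul]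
      rw [SetLike.mem_coe, h7]
      exact Submodule.smul_mem C _ hcC
  · push_neg at hconst
    obtain ⟨c, hcC, x, hcx⟩ := hconst
    have hexists : ∃ c' ∈ C, (∑ y, c' y) - c' Pinf ≠ 0 := by
      rcases eq_or_ne (∑ y, c y) (c Pinf) with hS | hS
      · obtain ⟨g, hg⟩ := Ptrans x
        refine ⟨fun y => c (pact g y), hinv g c hcC, ?_⟩
        show (∑ y, c (pact g y)) - c (pact g Pinf) ≠ 0
        rw [sum_pact g c, hg, hS]
        exact fun hcon => hcx (sub_eq_zero.1 hcon).symm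
      · exact ⟨c, hcC, sub_ne_zero_of_ne hS⟩
    obtain ⟨c', hc'C, hc'⟩ := hexists
    have hw : ((fun _ => 1) - Pi.single Pinf 1 : ℙ F (Fin 2 → F) → E) ∈ C := by
      have h8 := Submodule.smul_mem C ((∑ y, c' y) - c' Pinf)⁻¹ (havg c' hc'C)
      rwa [smul_smul, inv_mul_cancel₀ hc', one_smul] at h8
    have hsz : sumZeroCode E (ℙ F (Fin 2 → F)) ≤ C := hspan (hconj hw)
    by_cases hzero : ∀ c ∈ C, ∑ y, c y = 0
    · refine Or.inr (Or.inr (Or.inr (le_antisymm ?_ hsz)))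
      intro c hc
      rw [mem_sumZeroCode]
      exact hzero c hc
    · push_neg at hzero
      obtain ⟨d, hdC, hd⟩ := hzero
      have hone : (fun _ => (1 : E)) ∈ C := by
        have hmem : d - (∑ y, d y) • (fun _ => 1 : ℙ F (Fin 2 → F) → E)
            ∈ sumZeroCode E (ℙ F (Fin 2 → F)) := by
          rw [mem_sumZeroCode]
          simp [Finset.sum_sub_distrib, Pi.smul_apply, smul_eq_mul, Finset.sum_const,
            nsmul_eq_mul, hcardX]
        have h5 : (∑ y, d y) • (fun _ => 1 : ℙ F (Fin 2 → F) → E) ∈ C := by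
          have h9 := Submodule.sub_mem C hdC (hsz hmem)
          simpa using h9
        have h10 := Submodule.smul_mem C (∑ y, d y)⁻¹ h5
        rwa [smul_smul, inv_mul_cancel₀ hd, one_smul] at h10
      refine Or.inr (Or.inl ?_)
      rw [Submodule.eq_top_iff']
      intro f
      have hmem : f - (∑ y, f y) • (fun _ => 1 : ℙ F (Fin 2 → F) → E)
          ∈ sumZeroCode E (ℙ F (Fin 2 → F)) := by
        rw [mem_sumZeroCode]
        simp [Finset.sum_sub_distrib, Pi.smul_apply, smul_eq_mul, Finset.sum_const,
          nsmul_eq_mul, hcardX]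
      have h6 : f = (f - (∑ y, f y) • (fun _ => 1 : ℙ F (Fin 2 → F) → E))
          + (∑ y, f y) • (fun _ => 1 : ℙ F (Fin 2 → F) → E) := by
        abel
      rw [h6]
      exact Submodule.add_mem C (hsz hmem) (Submodule.smul_mem C _ hone)
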